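/- Let ξ ≥ 5 and, for j ≥ 2, let ξ_j > 1 be the unique real number with (ξ_j^j − ξ_j^{j−1})/log ξ_j = ξ/log ξ. Then ξ_j ≤ ξ^{1/j} for all j ≥ 2. -/

import Mathlib

lemma g_strictMonoOn : StrictMonoOn (fun t : ℝ => (t - 1) / Real.log t) (Set.Ioi 1) := by
  apply strictMonoOn_of_deriv_pos (convex_Ioi 1)
  · apply ContinuousOn.div (by fun_prop)
    · exact Real.continuousOn_log.mono (fun x hx => ne_of_gt (lt_trans one_pos hx))
    · intro x hx
      exact ne_of_gt (Real.log_pos hx)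
  · intro t ht
    rw [interior_Ioi] at ht
    have ht1 : 1 < t := ht
    have ht0 : 0 < t := lt_trans one_pos ht1
    have hlog : 0 < Real.log t := Real.log_pos ht1
    have hd : HasDerivAt (fun t : ℝ => (t - 1) / Real.log t)
        ((1 * Real.log t - (t - 1) * t⁻¹) / (Real.log t) ^ 2) t :=
      ((hasDerivAt_id t).sub_const 1).div (Real.hasDerivAt_log ht0.ne') hlog.ne'
    rw [hd.deriv]
    apply div_pos _ (by positivity)
    have hinv1 : t⁻¹ ≠ 1 := ne_of_lt (inv_lt_one_of_one_lt₀ ht1)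
    have h2 : Real.log t⁻¹ < t⁻¹ - 1 := Real.log_lt_sub_one_of_pos (by positivity) hinv1
    rw [Real.log_inv] at h2
    have h3 : (t - 1) * t⁻¹ = 1 - t⁻¹ := by field_simp
    linarith

lemma exp_three_half_lt_five : Real.exp (3 / 2) < 5 := by
  have h1 : Real.exp (3 / 2) ^ 2 = Real.exp 1 ^ 3 := by
    rw [← Real.exp_nat_mul, ← Real.exp_nat_mul]
    norm_num
  have h2 := Real.exp_one_lt_d9
  have h3 := Real.exp_pos (3 / 2 : ℝ)
  have h4 := Real.exp_pos (1 : ℝ)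
  have h5 : Real.exp 1 ^ 3 < 2.7182818286 ^ 3 := by
    exact pow_lt_pow_left₀ h2 h4.le (by norm_num)
  have h6 : (2.7182818286 : ℝ) ^ 3 < 25 := by norm_num
  nlinarith

theorem stmt8 (ξ : ℝ) (hξ : 5 ≤ ξ) (j : ℕ) (hj : 2 ≤ j) (ξj : ℝ) (hξj : 1 < ξj)
    (heq : (ξj ^ j - ξj ^ (j - 1)) / Real.log ξj = ξ / Real.log ξ) :
    ξj ≤ ξ ^ ((1 : ℝ) / j) := by
  obtain ⟨k, rfl⟩ : ∃ k, j = k + 1 := ⟨j - 1, by omega⟩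
  have hk : 1 ≤ k := by omega
  have hk0 : (0 : ℝ) < k := by exact_mod_cast hk
  simp only [Nat.add_sub_cancel] at heq
  have hξ1 : (1 : ℝ) < ξ := by linarith
  have hL : 0 < Real.log ξ := Real.log_pos hξ1
  set t0 : ℝ := ξ ^ ((1 : ℝ) / (k + 1 : ℕ)) with ht0def
  have hξ0 : (0 : ℝ) < ξ := by linarith
  have ht0 : 1 < t0 := (Real.one_lt_rpow_iff_of_pos hξ0).mpr (Or.inl ⟨hξ1, by positivity⟩)
  have ht0pos : 0 < t0 := lt_trans one_pos ht0
  have ht0j : t0 ^ (k + 1) = ξ := by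
    rw [ht0def, ← Real.rpow_natCast (ξ ^ ((1 : ℝ) / (k + 1 : ℕ))) (k + 1), ← Real.rpow_mul hξ0.le,
      one_div_mul_cancel (by positivity), Real.rpow_one]
  have hlogt0 : Real.log t0 = (1 / (k + 1 : ℕ)) * Real.log ξ := Real.log_rpow hξ0 _
  -- key bound : (k+1)/k ≤ t0, via ((k+1)/k)^(k+1) ≤ ξ = t0^(k+1)
  have hpow5 : ((k + 1 : ℝ) / k) ^ (k + 1) ≤ 5 := by
    have h1 : ((k + 1 : ℝ) / k) = 1 + 1 / k := by field_simp
    rcases eq_or_lt_of_le hk with h | hk2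
    · subst h
      norm_num
    · have hk2' : (2 : ℝ) ≤ k := by exact_mod_cast hk2
      have h2 : (1 + 1 / (k : ℝ)) ^ (k + 1) ≤ Real.exp (1 / k) ^ (k + 1) := by
        apply pow_le_pow_left₀ (by positivity)
        have := Real.add_one_le_exp (1 / (k : ℝ))
        linarith
      have h3 : Real.exp (1 / (k : ℝ)) ^ (k + 1) = Real.exp ((k + 1 : ℕ) * (1 / k)) :=
        (Real.exp_nat_mul _ _).symm
      have h4 : ((k + 1 : ℕ) : ℝ) * (1 / k) ≤ 3 / 2 := by
        push_cast
        rw [mul_one_div, div_le_div_iff₀ hk0 (by norm_num)]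
        linarith
      have h5 : Real.exp (((k + 1 : ℕ) : ℝ) * (1 / k)) ≤ Real.exp (3 / 2) :=
        Real.exp_le_exp.mpr h4
      have h6 := exp_three_half_lt_five
      calc ((k + 1 : ℝ) / k) ^ (k + 1) = (1 + 1 / (k : ℝ)) ^ (k + 1) := by rw [h1]
        _ ≤ Real.exp (1 / (k : ℝ)) ^ (k + 1) := h2
        _ = Real.exp (((k + 1 : ℕ) : ℝ) * (1 / k)) := h3
        _ ≤ Real.exp (3 / 2) := h5
        _ ≤ 5 := h6.le
  have hbound : ((k + 1 : ℝ) / k) ≤ t0 := by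
    have hpow : ((k + 1 : ℝ) / k) ^ (k + 1) ≤ t0 ^ (k + 1) := by
      rw [ht0j]; linarith
    exact le_of_pow_le_pow_left₀ (by omega) ht0pos.le hpow
  -- now main argument
  by_contra hcon
  push_neg at hcon
  -- hcon : t0 < ξj
  have hlogξj : 0 < Real.log ξj := Real.log_pos hξj
  -- F s = s^k * ((s-1)/log s) = (s^(k+1) - s^k)/log s
  have hFid : ∀ s : ℝ, 0 < s → (s ^ (k + 1) - s ^ k) / Real.log s
      = s ^ k * ((s - 1) / Real.log s) := by
    intro s hs
    rw [pow_succ]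
    ring
  -- F t0 ≥ ξ / log ξ
  have ht0k : t0 ^ k * t0 = ξ := by rw [← pow_succ, ht0j]
  have hFt0 : ξ / Real.log ξ ≤ (t0 ^ (k + 1) - t0 ^ k) / Real.log t0 := by
    rw [ht0j, hlogt0]
    rw [div_le_div_iff₀ hL (by positivity)]
    -- ξ * ((1/(k+1)) * log ξ) ≤ (ξ - t0^k) * log ξ
    have hkey : ξ * (1 / ((k : ℝ) + 1)) ≤ ξ - t0 ^ k := by
      -- t0^k = ξ / t0 ≤ ξ * k/(k+1)
      have h1 : t0 ^ k = ξ / t0 := by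
        field_simp [← ht0k]
        exact ht0k
      have h2 : ξ / t0 ≤ ξ * ((k : ℝ) / (k + 1)) := by
        rw [div_le_iff₀ ht0pos]
        have h3 : (1 : ℝ) ≤ (k / (k + 1)) * t0 := by
          calc (1 : ℝ) = ((k : ℝ) / (k + 1)) * ((k + 1) / k) := by
                field_simp
            _ ≤ ((k : ℝ) / (k + 1)) * t0 := by
                apply mul_le_mul_of_nonneg_left hbound (by positivity)
        calc ξ = ξ * 1 := (mul_one ξ).symm
          _ ≤ ξ * ((k / (k + 1)) * t0) := by
              apply mul_le_mul_of_nonneg_left h3 hξ0.le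
          _ = ξ * ((k : ℝ) / (k + 1)) * t0 := by ring
      rw [h1]
      have h4 : ξ * (1 / ((k : ℝ) + 1)) = ξ - ξ * ((k : ℝ) / (k + 1)) := by
        field_simp
        ring
      linarith
    push_cast
    calc ξ * (1 / ((k : ℝ) + 1) * Real.log ξ) = (ξ * (1 / ((k : ℝ) + 1))) * Real.log ξ := by ring
      _ ≤ (ξ - t0 ^ k) * Real.log ξ := by
          apply mul_le_mul_of_nonneg_right hkey hL.le
  -- F ξj > F t0
  have hg := g_strictMonoOn (Set.mem_Ioi.mpr ht0) (Set.mem_Ioi.mpr (lt_trans ht0 hcon)) hcon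
  have hpowlt : t0 ^ k < ξj ^ k := by
    apply pow_lt_pow_left₀ hcon ht0pos.le (by omega)
  have hgpos : 0 < (t0 - 1) / Real.log t0 := by
    apply div_pos (by linarith) (Real.log_pos ht0)
  have hFlt : (t0 ^ (k + 1) - t0 ^ k) / Real.log t0 < (ξj ^ (k + 1) - ξj ^ k) / Real.log ξj := by
    rw [hFid t0 ht0pos, hFid ξj (lt_trans one_pos hξj)]
    apply mul_lt_mul'' hpowlt hg (by positivity) hgpos.le
  rw [heq] at hFlt
  linarith
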